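/- Let (p_t, P_T) be a drift process with 𝔗 = ℝ equipped with the Borel σ-algebra. If (p_t, P_T) has proper drift, then there exists a change-point, i.e. a t₀ ∈ ℝ such that the sets {t < t₀} and {t ≥ t₀} both have positive P_T-measure and p_{{t < t₀}} ≠ p_{{t ≥ t₀}}. -/

import Mathlib

open MeasureTheory ProbabilityTheory

/-- A drift process has *no drift* if `p s = p t` for `(P_T × P_T)`-a.e. pair `(s, t)`. -/
def HasNoDrift {𝔗 𝔛 : Type*} [MeasurableSpace 𝔗] [MeasurableSpace 𝔛]
    (p : Kernel 𝔗 𝔛) (PT : Measure 𝔗) : Prop :=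
  ∀ᵐ st ∂(PT.prod PT), p st.1 = p st.2

/-- A drift process `(p_t, P_T)` has *no proper drift* if there exists a drift process
`(p'_t, P'_T)` with the same joint measure `p ⊗ P_T = p' ⊗ P'_T` that has no drift. -/
def HasNoProperDrift {𝔗 𝔛 : Type*} [MeasurableSpace 𝔗] [MeasurableSpace 𝔛]
    (p : Kernel 𝔗 𝔛) (PT : Measure 𝔗) : Prop :=
  ∃ (p' : Kernel 𝔗 𝔛) (PT' : Measure 𝔗), IsMarkovKernel p' ∧ IsProbabilityMeasure PT' ∧
    PT' ⊗ₘ p' = PT ⊗ₘ p ∧ HasNoDrift p' PT'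

/-- The `𝔗`-invariant model of a drift process over a non-null set `A`:
the probability measure `p_A(D) = P_T(A)⁻¹ ∫_A p_t(D) dP_T(t)`. -/
noncomputable def invariantModel {𝔗 𝔛 : Type*} [MeasurableSpace 𝔗] [MeasurableSpace 𝔛]
    (p : Kernel 𝔗 𝔛) (PT : Measure 𝔗) (A : Set 𝔗) : Measure 𝔛 :=
  (PT A)⁻¹ • (PT.restrict A).bind (fun t => p t)

/-- For `𝔗 = ℝ` (with the Borel σ-algebra): if a drift process has proper drift, then
there exists a change-point, i.e. a `t₀ ∈ ℝ` such that `{t < t₀}` and `{t ≥ t₀}` are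
non-null and `p_{{t < t₀}} ≠ p_{{t ≥ t₀}}`. -/
theorem changePoint_of_properDrift {𝔛 : Type*} [MeasurableSpace 𝔛]
    (p : Kernel ℝ 𝔛) [IsMarkovKernel p] (PT : Measure ℝ) [IsProbabilityMeasure PT]
    (hdrift : ¬ HasNoProperDrift p PT) :
    ∃ t₀ : ℝ, 0 < PT {t | t < t₀} ∧ 0 < PT {t | t₀ ≤ t} ∧
      invariantModel p PT {t | t < t₀} ≠ invariantModel p PT {t | t₀ ≤ t} := by
  by_contra hcp
  push_neg at hcp
  apply hdrift
  set μ : Measure 𝔛 := PT.bind (fun t => p t) with hμ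
  have hμ_apply : ∀ D : Set 𝔛, MeasurableSet D → μ D = ∫⁻ t, p t D ∂PT := fun D hD =>
    Measure.bind_apply hD (Kernel.measurable p).aemeasurable
  have hμprob : IsProbabilityMeasure μ := by
    constructor
    rw [hμ_apply _ MeasurableSet.univ]
    simp
  -- key: for all measurable D and B, ∫⁻ t in B, p t D ∂PT = μ D * PT B
  have key : ∀ D : Set 𝔛, MeasurableSet D → ∀ B : Set ℝ, MeasurableSet B →
      ∫⁻ t in B, p t D ∂PT = μ D * PT B := by
    intro D hD
    have hmeas : Measurable fun t => p t D := Kernel.measurable_coe p hD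
    -- two finite measures on ℝ
    have hfin : ∫⁻ t, p t D ∂PT ≠ ⊤ := by
      rw [← hμ_apply _ hD]; exact measure_ne_top μ D
    have h1 : IsFiniteMeasure (PT.withDensity fun t => p t D) :=
      isFiniteMeasure_withDensity hfin
    have h2 : IsFiniteMeasure ((μ D) • PT) := by
      refine ⟨?_⟩
      simp only [Measure.smul_apply, smul_eq_mul]
      exact ENNReal.mul_lt_top (measure_lt_top μ D) (measure_lt_top PT _)
    have heq : PT.withDensity (fun t => p t D) = (μ D) • PT := by
      refine ext_of_generate_finite (Set.range Set.Iio)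
        (BorelSpace.measurable_eq.trans (borel_eq_generateFrom_Iio ℝ)) ?_ ?_ ?_
      · rintro _ ⟨a, rfl⟩ _ ⟨b, rfl⟩ -
        exact ⟨min a b, (Set.Iio_inter_Iio).symm⟩
      · rintro _ ⟨a, rfl⟩
        rw [withDensity_apply _ measurableSet_Iio, Measure.smul_apply, smul_eq_mul]
        have hsplit : (∫⁻ t in Set.Iio a, p t D ∂PT) + ∫⁻ t in Set.Ici a, p t D ∂PT
            = μ D := by
          rw [hμ_apply _ hD, ← Set.compl_Iio]
          exact lintegral_add_compl _ measurableSet_Iio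
        have hPTsplit : PT (Set.Iio a) + PT (Set.Ici a) = 1 := by
          rw [← Set.compl_Iio, measure_add_measure_compl measurableSet_Iio,
            measure_univ]
        rcases eq_or_lt_of_le (zero_le : 0 ≤ PT (Set.Iio a)) with hz | hpos
        · rw [setLIntegral_measure_zero _ _ hz.symm, ← hz, mul_zero]
        rcases eq_or_lt_of_le (zero_le : 0 ≤ PT (Set.Ici a)) with hz | hpos'
        · have hPT1 : PT (Set.Iio a) = 1 := by
            rw [← hPTsplit, ← hz, add_zero]
          have : ∫⁻ t in Set.Ici a, p t D ∂PT = 0 :=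
            setLIntegral_measure_zero _ _ hz.symm
          rw [hPT1, mul_one, ← hsplit, this, add_zero]
        · -- both halves positive: use the no-change-point hypothesis
          have hinv := hcp a hpos hpos'
          have hIio : {t : ℝ | t < a} = Set.Iio a := rfl
          have hIci : {t : ℝ | a ≤ t} = Set.Ici a := rfl
          rw [hIio, hIci] at hinv
          have hinvD := congrArg (fun m : Measure 𝔛 => m D) hinv
          simp only [invariantModel, Measure.smul_apply, smul_eq_mul] at hinvD
          rw [Measure.bind_apply hD (Kernel.measurable p).aemeasurable,
            Measure.bind_apply hD (Kernel.measurable p).aemeasurable] at hinvD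
          set x := ∫⁻ t in Set.Iio a, p t D ∂PT with hx
          set y := ∫⁻ t in Set.Ici a, p t D ∂PT with hy
          set c := PT (Set.Iio a) with hc
          set d := PT (Set.Ici a) with hdd
          have hc0 : c ≠ 0 := hpos.ne'
          have hd0 : d ≠ 0 := hpos'.ne'
          have hctop : c ≠ ⊤ := measure_ne_top PT _
          have hdtop : d ≠ ⊤ := measure_ne_top PT _
          -- hinvD : c⁻¹ * x = d⁻¹ * y
          have hxb : x * d = c * y := by
            have h1 : x = c * (d⁻¹ * y) := by
              rw [← hinvD, ← mul_assoc, ENNReal.mul_inv_cancel hc0 hctop, one_mul]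
            rw [h1, mul_assoc, mul_assoc, mul_comm y d, ← mul_assoc d⁻¹,
              ENNReal.inv_mul_cancel hd0 hdtop, one_mul]
          calc x = x * 1 := (mul_one x).symm
            _ = x * (c + d) := by rw [hPTsplit]
            _ = x * c + x * d := mul_add x c d
            _ = x * c + c * y := by rw [hxb]
            _ = c * (x + y) := by ring
            _ = (x + y) * c := mul_comm _ _
            _ = μ D * c := by rw [hsplit]
      · rw [withDensity_apply _ MeasurableSet.univ, Measure.restrict_univ,
          Measure.smul_apply, smul_eq_mul, measure_univ, mul_one, hμ_apply _ hD]
    intro B hB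
    rw [← withDensity_apply _ hB, heq, Measure.smul_apply, smul_eq_mul]
  refine ⟨Kernel.const ℝ μ, PT, inferInstance, inferInstance, ?_, ?_⟩
  · rw [Measure.compProd_const]
    refine Measure.prod_eq fun s t hs ht => ?_
    rw [Measure.compProd_apply_prod hs ht, key t ht s hs, mul_comm]
  · exact Filter.Eventually.of_forall fun st => by simp [Kernel.const_apply]
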